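/- Let H and K be p-adic Hilbert spaces (ultrametric Banach spaces in which every finitely generated subspace admits a norm-orthogonal basis). Then the projective seminorm ‖·‖_π on the algebraic tensor product H ⊗ K is a norm: ‖u‖_π = 0 implies u = 0. -/

import Mathlib

open scoped TensorProduct

/-- The ultrametric projective seminorm on the algebraic tensor product:
`‖u‖_π = inf { maxᵢ ‖xᵢ‖·‖yᵢ‖ : u = Σᵢ xᵢ ⊗ yᵢ }`. -/
noncomputable def projNorm {F H K : Type*} [NormedField F]
    [NormedAddCommGroup H] [NormedSpace F H]
    [NormedAddCommGroup K] [NormedSpace F K] (u : H ⊗[F] K) : ℝ :=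
  sInf {r : ℝ | ∃ (n : ℕ) (x : Fin n → H) (y : Fin n → K),
    u = ∑ i, x i ⊗ₜ[F] y i ∧ r = ⨆ i, ‖x i‖ * ‖y i‖}

/-- Every finitely generated subspace admits a norm-orthogonal basis: for each finite
family of vectors, the subspace it spans is also spanned by a norm-orthogonal system. -/
def FinDimOrthogonalizable (F E : Type*) [NormedField F]
    [NormedAddCommGroup E] [NormedSpace F E] : Prop :=
  ∀ (n : ℕ) (v : Fin n → E), ∃ (m : ℕ) (b : Fin m → E),
    Submodule.span F (Set.range v) = Submodule.span F (Set.range b) ∧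
    ∀ α : Fin m → F, ‖∑ i, α i • b i‖ = ⨆ i, ‖α i • b i‖

section Aux

variable {F H K : Type*} [NormedField F]
    [NormedAddCommGroup H] [NormedSpace F H]
    [NormedAddCommGroup K] [NormedSpace F K]

lemma le_ciSup_fin {q : ℕ} (f : Fin q → ℝ) (k : Fin q) : f k ≤ ⨆ k, f k :=
  le_ciSup (Set.Finite.bddAbove (Set.finite_range f)) k

/-- Every element of the algebraic tensor product is a finite sum of simple tensors. -/
lemma exists_fin_rep (u : H ⊗[F] K) :
    ∃ (n : ℕ) (x : Fin n → H) (y : Fin n → K), u = ∑ i, x i ⊗ₜ[F] y i := by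
  induction u with
  | zero => exact ⟨0, ![], ![], by simp⟩
  | tmul a b => exact ⟨1, ![a], ![b], by simp⟩
  | add v w hv hw =>
    obtain ⟨n1, x1, y1, h1⟩ := hv
    obtain ⟨n2, x2, y2, h2⟩ := hw
    refine ⟨n1 + n2, Fin.append x1 x2, Fin.append y1 y2, ?_⟩
    rw [Fin.sum_univ_add]
    simp only [Fin.append_left, Fin.append_right]
    rw [h1, h2]

/-- For a norm-orthogonal family `d` and an index `k₀` with `d k₀ ≠ 0`, there is a linear
functional which is `1` at `d k₀` and `0` at the other members of the family. -/
lemma exists_delta {p : ℕ} (d : Fin p → H)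
    (hd : ∀ α : Fin p → F, ‖∑ k, α k • d k‖ = ⨆ k, ‖α k • d k‖)
    (k₀ : Fin p) (hk₀ : d k₀ ≠ 0) :
    ∃ φ : H →ₗ[F] F, ∀ k, φ (d k) = if k = k₀ then 1 else 0 := by
  classical
  set d' : {k : Fin p // d k ≠ 0} → H := fun j => d j.1 with hd'def
  have hli : LinearIndependent F d' := by
    rw [Fintype.linearIndependent_iff]
    intro g hg j
    set G : Fin p → F := fun k => if h : d k ≠ 0 then g ⟨k, h⟩ else 0 with hG
    have hsum : ∑ k, G k • d k = ∑ j, g j • d' j := by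
      rw [← Finset.sum_filter_of_ne (p := fun k => d k ≠ 0)
        (f := fun k => G k • d k) (fun x _ hx h0 => hx (show G x • d x = 0 by
          rw [h0, smul_zero]))]
      rw [Finset.sum_subtype (p := fun k => d k ≠ 0)
        (Finset.univ.filter (fun k => d k ≠ 0))
        (fun x => by simp) (fun k => G k • d k)]
      refine Finset.sum_congr rfl fun j _ => ?_
      simp only [hG, dif_pos j.2]
      rfl
    have hzero : ∀ k, ‖G k • d k‖ = 0 := by
      intro k
      refine le_antisymm ?_ (norm_nonneg _)
      calc ‖G k • d k‖ ≤ ⨆ k, ‖G k • d k‖ :=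
            le_ciSup_fin (fun k => ‖G k • d k‖) k
        _ = ‖∑ k, G k • d k‖ := (hd G).symm
        _ = 0 := by rw [hsum, hg, norm_zero]
    have hj := hzero j.1
    simp only [hG, dif_pos j.2] at hj
    rcases smul_eq_zero.1 (norm_eq_zero.1 hj) with h | h
    · exact h
    · exact absurd h j.2
  obtain ⟨q, hq⟩ := Submodule.exists_isCompl (Submodule.span F (Set.range d'))
  set B : Module.Basis _ F (Submodule.span F (Set.range d')) := Module.Basis.span hli with hB
  refine ⟨(B.coord ⟨k₀, hk₀⟩) ∘ₗ (Submodule.linearProjOfIsCompl _ q hq), fun k => ?_⟩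
  by_cases hk : d k ≠ 0
  · have hmem : d k ∈ Submodule.span F (Set.range d') :=
      Submodule.subset_span ⟨⟨k, hk⟩, rfl⟩
    have hproj : (Submodule.linearProjOfIsCompl _ q hq) (d k) = ⟨d k, hmem⟩ :=
      Submodule.linearProjOfIsCompl_apply_left hq ⟨d k, hmem⟩
    have hBk : (⟨d k, hmem⟩ : Submodule.span F (Set.range d')) = B ⟨k, hk⟩ := by
      apply Subtype.ext
      rw [hB, Module.Basis.span_apply]
    rw [LinearMap.comp_apply, hproj, hBk, Module.Basis.coord_apply, Module.Basis.repr_self,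
      Finsupp.single_apply]
    by_cases hkk : k = k₀
    · subst hkk; simp
    · rw [if_neg (by simpa [Subtype.ext_iff] using hkk), if_neg hkk]
  · push_neg at hk
    have hne : k ≠ k₀ := by rintro rfl; exact hk₀ hk
    rw [LinearMap.comp_apply, hk, map_zero, map_zero, if_neg hne]

end Aux

/-- Let `H` and `K` be `p`-adic Hilbert spaces (ultrametric Banach spaces
over a nonarchimedean field in which every finitely generated subspace admits a
norm-orthogonal basis). Then the projective seminorm `‖·‖_π` on `H ⊗ K` is a norm:
`‖u‖_π = 0` implies `u = 0`. -/
theorem projNorm_eq_zero_imp_eq_zero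
    {F H K : Type*} [NormedField F] [IsUltrametricDist F] [CompleteSpace F]
    [NormedAddCommGroup H] [NormedSpace F H] [IsUltrametricDist H] [CompleteSpace H]
    [NormedAddCommGroup K] [NormedSpace F K] [IsUltrametricDist K] [CompleteSpace K]
    (hH : FinDimOrthogonalizable F H) (hK : FinDimOrthogonalizable F K) :
    ∀ u : H ⊗[F] K, projNorm u = 0 → u = 0 := by
  classical
  intro u hu
  by_contra hne
  -- Step 1: some representation of `u`.
  obtain ⟨n0, v, w, hvw⟩ := exists_fin_rep u
  -- Step 2: replace the right-hand family by a norm-orthogonal one.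
  obtain ⟨n, y, hspanK, horthoK⟩ := hK n0 w
  have hwmem : ∀ j, ∃ c : Fin n → F, ∑ i, c i • y i = w j := by
    intro j
    have : w j ∈ Submodule.span F (Set.range y) := by
      rw [← hspanK]
      exact Submodule.subset_span (Set.mem_range_self j)
    exact (Submodule.mem_span_range_iff_exists_fun F).1 this
  choose c hc using hwmem
  set x : Fin n → H := fun i => ∑ j, c j i • v j with hx
  have hrep : u = ∑ i, x i ⊗ₜ[F] y i := by
    rw [hvw]
    have h1 : ∀ j, v j ⊗ₜ[F] w j = ∑ i, (c j i • v j) ⊗ₜ[F] y i := by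
      intro j
      rw [← hc j, TensorProduct.tmul_sum]
      exact Finset.sum_congr rfl fun i _ => by
        rw [TensorProduct.tmul_smul, TensorProduct.smul_tmul']
    rw [Finset.sum_congr rfl fun j _ => h1 j, Finset.sum_comm]
    exact Finset.sum_congr rfl fun i _ => (TensorProduct.sum_tmul _ _ _).symm
  -- Step 3: pick an index with a genuinely nonzero simple tensor.
  have hex : ∃ i, x i ≠ 0 ∧ y i ≠ 0 := by
    by_contra h
    push_neg at h
    apply hne
    rw [hrep]
    refine Finset.sum_eq_zero fun i _ => ?_
    by_cases hxi : x i = 0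
    · rw [hxi, TensorProduct.zero_tmul]
    · rw [h i hxi, TensorProduct.tmul_zero]
  obtain ⟨i₀, hxi₀, hyi₀⟩ := hex
  set ε : ℝ := ‖x i₀‖ * ‖y i₀‖ with hε
  have hεpos : 0 < ε := mul_pos (norm_pos_iff.2 hxi₀) (norm_pos_iff.2 hyi₀)
  -- Step 4: every representation value is at least `ε`.
  have key : ∀ r ∈ {r : ℝ | ∃ (m : ℕ) (a : Fin m → H) (b : Fin m → K),
      u = ∑ j, a j ⊗ₜ[F] b j ∧ r = ⨆ j, ‖a j‖ * ‖b j‖}, ε ≤ r := by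
    rintro r ⟨m, a, b, hab, rfl⟩
    rcases Nat.eq_zero_or_pos m with hm | hm
    · exfalso
      apply hne
      rw [hab]
      subst hm
      simp
    haveI : Nonempty (Fin m) := ⟨⟨0, hm⟩⟩
    -- orthogonalize the combined left-hand family
    obtain ⟨p, d, hspanH, horthoH⟩ := hH (m + n) (Fin.append a x)
    have hamem : ∀ j, ∃ α : Fin p → F, ∑ k, α k • d k = a j := by
      intro j
      have : a j ∈ Submodule.span F (Set.range d) := by
        rw [← hspanH]
        exact Submodule.subset_span ⟨Fin.castAdd n j, Fin.append_left a x j⟩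
      exact (Submodule.mem_span_range_iff_exists_fun F).1 this
    have hxmem : ∀ i, ∃ γ : Fin p → F, ∑ k, γ k • d k = x i := by
      intro i
      have : x i ∈ Submodule.span F (Set.range d) := by
        rw [← hspanH]
        exact Submodule.subset_span ⟨Fin.natAdd m i, Fin.append_right a x i⟩
      exact (Submodule.mem_span_range_iff_exists_fun F).1 this
    choose α hα using hamem
    choose γ hγ using hxmem
    have hxnorm : ‖x i₀‖ = ⨆ k, ‖γ i₀ k • d k‖ := by
      rw [← hγ i₀]; exact horthoH (γ i₀)
    -- p ≠ 0
    rcases Nat.eq_zero_or_pos p with hp | hp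
    · exfalso
      apply hxi₀
      rw [← hγ i₀]
      subst hp
      simp
    haveI : Nonempty (Fin p) := ⟨⟨0, hp⟩⟩
    -- maximizing index
    obtain ⟨k₀, hk₀max⟩ := Finite.exists_max (fun k => ‖γ i₀ k • d k‖)
    have hxk : ‖x i₀‖ = ‖γ i₀ k₀ • d k₀‖ := by
      rw [hxnorm]
      exact le_antisymm (ciSup_le hk₀max)
        (le_ciSup_fin (fun k => ‖γ i₀ k • d k‖) k₀)
    have hdk₀ : d k₀ ≠ 0 := by
      intro h0
      apply hxi₀
      rw [← norm_eq_zero, hxk, h0, smul_zero, norm_zero]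
    -- the delta functional and the induced map on the tensor product
    obtain ⟨φ, hφ⟩ := exists_delta d horthoH k₀ hdk₀
    set Φ : H ⊗[F] K →ₗ[F] K :=
      (TensorProduct.lid F K).toLinearMap ∘ₗ (LinearMap.rTensor K φ) with hΦ
    have hΦt : ∀ (h : H) (kk : K), Φ (h ⊗ₜ[F] kk) = φ h • kk := by
      intro h kk
      simp [hΦ, LinearMap.rTensor_tmul]
    have hφa : ∀ j, φ (a j) = α j k₀ := by
      intro j
      rw [← hα j, map_sum]
      simp only [map_smul, hφ, smul_eq_mul, mul_ite, mul_one, mul_zero]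
      simp
    have hφx : ∀ i, φ (x i) = γ i k₀ := by
      intro i
      rw [← hγ i, map_sum]
      simp only [map_smul, hφ, smul_eq_mul, mul_ite, mul_one, mul_zero]
      simp
    have hΦ1 : Φ u = ∑ j, α j k₀ • b j := by
      rw [hab, map_sum]
      exact Finset.sum_congr rfl fun j _ => by rw [hΦt, hφa]
    have hΦ2 : Φ u = ∑ i, γ i k₀ • y i := by
      rw [hrep, map_sum]
      exact Finset.sum_congr rfl fun i _ => by rw [hΦt, hφx]
    -- lower bound for ‖Φ u‖ from orthogonality of y
    have hlow : ‖γ i₀ k₀ • y i₀‖ ≤ ‖Φ u‖ := by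
      rw [hΦ2, horthoK (fun i => γ i k₀)]
      exact le_ciSup_fin (fun i => ‖γ i k₀ • y i‖) i₀
    -- upper bound: ‖Φ u‖ * ‖d k₀‖ ≤ r
    have hup : ‖Φ u‖ * ‖d k₀‖ ≤ ⨆ j, ‖a j‖ * ‖b j‖ := by
      have hΦle : ‖Φ u‖ ≤ Finset.univ.sup' Finset.univ_nonempty
          (fun j => ‖α j k₀ • b j‖) := by
        rw [hΦ1]
        exact Finset.Nonempty.norm_sum_le_sup'_norm Finset.univ_nonempty _
      obtain ⟨j₁, _, hj₁⟩ := Finset.exists_mem_eq_sup' Finset.univ_nonempty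
        (fun j => ‖α j k₀ • b j‖)
      have hαd : ‖α j₁ k₀ • d k₀‖ ≤ ‖a j₁‖ := by
        have h' := horthoH (α j₁)
        rw [hα j₁] at h'
        rw [h']
        exact le_ciSup_fin (fun k => ‖α j₁ k • d k‖) k₀
      calc ‖Φ u‖ * ‖d k₀‖
          ≤ ‖α j₁ k₀ • b j₁‖ * ‖d k₀‖ := by
            apply mul_le_mul_of_nonneg_right _ (norm_nonneg _)
            rw [← hj₁]; exact hΦle
        _ = ‖α j₁ k₀ • d k₀‖ * ‖b j₁‖ := by
            rw [norm_smul, norm_smul]; ring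
        _ ≤ ‖a j₁‖ * ‖b j₁‖ := mul_le_mul_of_nonneg_right hαd (norm_nonneg _)
        _ ≤ ⨆ j, ‖a j‖ * ‖b j‖ :=
            le_ciSup_fin (fun j => ‖a j‖ * ‖b j‖) j₁
    -- combine
    calc ε = ‖x i₀‖ * ‖y i₀‖ := hε
      _ = ‖γ i₀ k₀ • d k₀‖ * ‖y i₀‖ := by rw [hxk]
      _ = ‖γ i₀ k₀ • y i₀‖ * ‖d k₀‖ := by
          rw [norm_smul, norm_smul]; ring
      _ ≤ ‖Φ u‖ * ‖d k₀‖ := mul_le_mul_of_nonneg_right hlow (norm_nonneg _)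
      _ ≤ ⨆ j, ‖a j‖ * ‖b j‖ := hup
  -- Step 5: conclude.
  have hnonempty : {r : ℝ | ∃ (m : ℕ) (a : Fin m → H) (b : Fin m → K),
      u = ∑ j, a j ⊗ₜ[F] b j ∧ r = ⨆ j, ‖a j‖ * ‖b j‖}.Nonempty :=
    ⟨⨆ i, ‖x i‖ * ‖y i‖, n, x, y, hrep, rfl⟩
  have hge : ε ≤ projNorm u := le_csInf hnonempty key
  rw [hu] at hge
  linarith
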